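/- Let q be a real number with q > 0 and q ≠ 1, let λ, λ' ∈ ℝ with λ+λ' ∉ ℤ, and let n ∈ ℕ. Define Ψ_n : ℂ[z] → ℂ[x,y] by Ψ_n(z^k) = ΔE^k(P_n^{λ,λ'}), and define the q-Rankin–Cohen bracket qRC_n : ℂ[x] × ℂ[y] → ℂ[z] by qRC_n(f,g)(z) = Σ_{k=0}^n [n choose k]_q (−1)^k q^{k(λ'+2n−k−1)} [λ+k]_{n−k}[λ'+n−k]_k (D_{q²}^k f)(z) · (D_{q²}^{n−k} g)(q^{λ+2k} z). Then qRC_n is the adjoint of the holographic operator Ψ_n with respect to the q-Fischer inner products: for all P ∈ ℂ[z] and all f ∈ ℂ[x], g ∈ ℂ[y], ⟨Ψ_n(P), f(x)g(y)⟩_{ℂ[x,y]} = ⟨P, qRC_n(f,g)⟩_{ℂ[z]}. -/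

import Mathlib

noncomputable section

open Finset

/-- The q-number [x] = (q^x − q^{−x})/(q − q⁻¹) for real q > 0 and x ∈ ℝ. -/
def qnumR (q x : ℝ) : ℝ := (q ^ x - q ^ (-x)) / (q - q⁻¹)

/-- [x]_n = ∏_{s=0}^{n−1}[x+s]. -/
def qpochR (q x : ℝ) (n : ℕ) : ℝ := ∏ s ∈ Finset.range n, qnumR q (x + s)

/-- [n]! = [1]_n. -/
def qfactR (q : ℝ) (n : ℕ) : ℝ := ∏ s ∈ Finset.range n, qnumR q ((s : ℝ) + 1)

/-- [n choose k] = [n]!/([k]![n−k]!). -/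
def qbinomR (q : ℝ) (n k : ℕ) : ℝ := qfactR q n / (qfactR q k * qfactR q (n - k))

/-- ℂ[z] with basis the monomials z^m (with its convolution product). -/
abbrev P1 : Type := AddMonoidAlgebra ℂ ℕ

/-- ℂ[x] ⊗ ℂ[y] with basis the monomials x^k y^l. -/
abbrev P2 : Type := (ℕ × ℕ) →₀ ℂ

def mono (k l : ℕ) : P2 := Finsupp.single (k, l) 1

/-- q-Fischer inner product on ℂ[z]: ⟨z^n, z^m⟩ = δ_{n,m} q^{n(n−1)/2}[n]!. -/
def ip1 (q : ℝ) (P Q : P1) : ℂ :=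
  Finsupp.sum P.coeff fun m c =>
    c * (starRingEnd ℂ) (Q.coeff m) * ((q : ℂ) ^ (m * (m - 1) / 2) * (qfactR q m : ℂ))

/-- q-Fischer inner product on ℂ[x]⊗ℂ[y]:
⟨x^a y^b, x^c y^d⟩ = δ_{a,c} δ_{b,d} q^{a(a−1)/2+b(b−1)/2}[a]![b]!. -/
def ip2 (q : ℝ) (P Q : P2) : ℂ :=
  Finsupp.sum P fun ab c =>
    c * (starRingEnd ℂ) (Q ab) *
      ((q : ℂ) ^ (ab.1 * (ab.1 - 1) / 2 + ab.2 * (ab.2 - 1) / 2)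
        * (qfactR q ab.1 : ℂ) * (qfactR q ab.2 : ℂ))

/-- The element f(x)g(y) of ℂ[x]⊗ℂ[y]. -/
def fg (f g : P1) : P2 :=
  Finsupp.sum f.coeff fun a ca => Finsupp.sum g.coeff fun b cb => Finsupp.single (a, b) (ca * cb)

/-- The q-derivative D_{q²}, with D_{q²} z^m = q^{m−1}[m] z^{m−1}. -/
def Dq (q : ℝ) : P1 →ₗ[ℂ] P1 :=
  (Finsupp.lsum ℂ fun (m : ℕ) => LinearMap.toSpanSingleton ℂ P1
    (((q ^ (m - 1) * qnumR q m : ℝ) : ℂ) • (AddMonoidAlgebra.single (m - 1) 1 : P1))) ∘ₗ (AddMonoidAlgebra.coeffLinearEquiv ℂ).toLinearMap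

/-- The scaling operator h(z) ↦ h(c·z). -/
def scP (c : ℂ) : P1 →ₗ[ℂ] P1 :=
  (Finsupp.lsum ℂ fun (m : ℕ) => LinearMap.toSpanSingleton ℂ P1
    ((c ^ m) • (AddMonoidAlgebra.single m 1 : P1))) ∘ₗ (AddMonoidAlgebra.coeffLinearEquiv ℂ).toLinearMap
/-- ΔE(x^k y^l) = x^{k+1} y^l + q^{λ+2k} x^k y^{l+1}. -/
def ΔE (q lam : ℝ) : P2 →ₗ[ℂ] P2 :=
  Finsupp.lsum ℂ fun kl => LinearMap.toSpanSingleton ℂ P2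
    (mono (kl.1 + 1) kl.2
      + (((q ^ (lam + 2 * (kl.1 : ℝ)) : ℝ) : ℂ)) • mono kl.1 (kl.2 + 1))

/-- The lowest-weight vector P_n^{λ,λ'} ∈ ℂ[x,y]. -/
def Pvec (q lam lam' : ℝ) (n : ℕ) : P2 :=
  ∑ k ∈ Finset.range (n + 1),
    (((qbinomR q n k * (-1) ^ k * q ^ ((k : ℝ) * (lam' + 2 * (n : ℝ) - (k : ℝ) - 1))
      * qpochR q (lam + (k : ℝ)) (n - k) * qpochR q (lam' + ((n - k : ℕ) : ℝ)) k : ℝ)) : ℂ)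
      • mono k (n - k)

/-- The holographic operator Ψ_n : ℂ[z] → ℂ[x,y], z^k ↦ ΔE^k(P_n^{λ,λ'}). -/
def Psi (q lam lam' : ℝ) (n : ℕ) : P1 →ₗ[ℂ] P2 :=
  (Finsupp.lsum ℂ fun (k : ℕ) => LinearMap.toSpanSingleton ℂ P2
    (((ΔE q lam) ^ k) (Pvec q lam lam' n))) ∘ₗ (AddMonoidAlgebra.coeffLinearEquiv ℂ).toLinearMap

/-- The q-Rankin–Cohen bracket
qRC_n(f,g)(z) = Σ_{k=0}^n [n choose k] (−1)^k q^{k(λ'+2n−k−1)} [λ+k]_{n−k}[λ'+n−k]_k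
(D_{q²}^k f)(z)·(D_{q²}^{n−k} g)(q^{λ+2k} z). -/
def qRC (q lam lam' : ℝ) (n : ℕ) (f g : P1) : P1 :=
  ∑ k ∈ Finset.range (n + 1),
    (((qbinomR q n k * (-1) ^ k * q ^ ((k : ℝ) * (lam' + 2 * (n : ℝ) - (k : ℝ) - 1))
      * qpochR q (lam + (k : ℝ)) (n - k) * qpochR q (lam' + ((n - k : ℕ) : ℝ)) k : ℝ)) : ℂ)
      • ((((Dq q) ^ k) f) * scP (((q ^ (lam + 2 * (k : ℝ)) : ℝ) : ℂ)) (((Dq q) ^ (n - k)) g))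


namespace QRC
open Finset Finsupp ComplexConjugate

variable {q lam lam' : ℝ}

/-- coefficient of the q-derivative on z^m -/
def dco (q : ℝ) (m : ℕ) : ℝ := q ^ (m - 1) * qnumR q m

lemma qnumR_zero : qnumR q 0 = 0 := by
  simp [qnumR]

lemma dco_zero : dco q 0 = 0 := by
  simp [dco, qnumR_zero]

lemma tri (m : ℕ) : m * (m - 1) / 2 + m = (m + 1) * m / 2 := by
  rcases m with _ | m
  · simp
  · have h : (m + 1 + 1) * (m + 1) = (m + 1) * (m + 1 - 1) + (m + 1) * 2 := by
      simp [Nat.succ_sub_one]; ring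
    rw [h, Nat.add_mul_div_right _ _ (by norm_num : 0 < 2)]

lemma qfact_succ (m : ℕ) : qfactR q (m + 1) = qfactR q m * qnumR q (m + 1) := by
  rw [qfactR, Finset.prod_range_succ]; rfl

lemma hqq (hq : 0 < q) (hq1 : q ≠ 1) : q - q⁻¹ ≠ 0 := by
  intro h
  have hq0 : q ≠ 0 := ne_of_gt hq
  have h1 : q = q⁻¹ := by linarith
  have h2 : q * q = 1 := by
    nth_rewrite 2 [h1]
    exact mul_inv_cancel₀ hq0
  rcases mul_self_eq_one_iff.mp h2 with h3 | h3
  · exact hq1 h3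
  · linarith

/-- The key q-number splitting identity (real exponents). -/
lemma qnum_split (hq : 0 < q) (hq1 : q ≠ 1) (x y : ℝ) :
    q ^ (x + y) * qnumR q (x + y) = q ^ x * qnumR q x + q ^ (2 * x + y) * qnumR q y := by
  have hX : q ^ x ≠ 0 := (Real.rpow_pos_of_pos hq x).ne'
  have hY : q ^ y ≠ 0 := (Real.rpow_pos_of_pos hq y).ne'
  have h2 : (2 : ℝ) * x + y = x + x + y := by ring
  have key : q ^ (x + y) * (q ^ (x + y) - q ^ (-(x + y)))
      = q ^ x * (q ^ x - q ^ (-x)) + q ^ (2 * x + y) * (q ^ y - q ^ (-y)) := by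
    rw [h2]
    simp only [neg_add, Real.rpow_add hq, Real.rpow_neg hq.le]
    field_simp
    ring
  unfold qnumR
  simp only [← mul_div_assoc, ← add_div]
  rw [key]

end QRC
namespace QRC
open Finset Finsupp ComplexConjugate

variable {q lam lam' : ℝ}

/-- generic extension from singles -/
lemma ext_single {α M : Type*} [AddCommMonoid M] {F G : (α →₀ ℂ) → M}
    (hF : ∀ u v, F (u + v) = F u + F v) (hG : ∀ u v, G (u + v) = G u + G v)
    (h0 : F 0 = G 0) (hs : ∀ a c, F (Finsupp.single a c) = G (Finsupp.single a c)) :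
    ∀ f, F f = G f := by
  intro f
  induction f using Finsupp.induction with
  | zero => exact h0
  | single_add a b f _ _ ih => rw [hF, hG, hs, ih]

lemma ext_single1 {M : Type*} [AddCommMonoid M] {F G : P1 → M}
    (hF : ∀ u v, F (u + v) = F u + F v) (hG : ∀ u v, G (u + v) = G u + G v)
    (h0 : F 0 = G 0) (hs : ∀ a c, F (AddMonoidAlgebra.single a c) = G (AddMonoidAlgebra.single a c)) :
    ∀ f, F f = G f := by
  intro f
  induction f using AddMonoidAlgebra.induction with
  | zero => exact h0
  | single_add a b f _ _ ih => rw [hF, hG, hs, ih]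

lemma Dq_single (a : ℕ) (c : ℂ) :
    Dq q (AddMonoidAlgebra.single a c) = AddMonoidAlgebra.single (a - 1) ((dco q a : ℝ) * c) := by
  have h : Dq q (AddMonoidAlgebra.single a c) = (Finsupp.single a c).sum fun m d =>
      d • (((q ^ (m - 1) * qnumR q m : ℝ) : ℂ) • (AddMonoidAlgebra.single (m - 1) 1 : P1)) := rfl
  rw [h, Finsupp.sum_single_index (by simp), smul_smul, AddMonoidAlgebra.smul_single,
    smul_eq_mul, mul_one, mul_comm]
  rfl

lemma scP_single (c : ℂ) (a : ℕ) (x : ℂ) :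
    scP c (AddMonoidAlgebra.single a x) = AddMonoidAlgebra.single a (c ^ a * x) := by
  have h : scP c (AddMonoidAlgebra.single a x) = (Finsupp.single a x).sum fun m d =>
      d • ((c ^ m) • (AddMonoidAlgebra.single m 1 : P1)) := rfl
  rw [h, Finsupp.sum_single_index (by simp), smul_smul, AddMonoidAlgebra.smul_single,
    smul_eq_mul, mul_one, mul_comm]

lemma ΔE_single (k l : ℕ) (c : ℂ) :
    ΔE q lam (Finsupp.single (k, l) c)
      = Finsupp.single (k + 1, l) c
        + Finsupp.single (k, l + 1) (((q ^ (lam + 2 * (k : ℝ)) : ℝ) : ℂ) * c) := by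
  have h : ΔE q lam (Finsupp.single (k, l) c) = (Finsupp.single (k, l) c : P2).sum fun kl d =>
      d • (mono (kl.1 + 1) kl.2
        + (((q ^ (lam + 2 * (kl.1 : ℝ)) : ℝ) : ℂ)) • mono kl.1 (kl.2 + 1)) := rfl
  rw [h, Finsupp.sum_single_index (by simp), smul_add, smul_smul]
  simp [mono, Finsupp.smul_single, mul_comm]

/-- adjoint of ΔE -/
def Tad (q lam : ℝ) : P2 →ₗ[ℂ] P2 :=
  Finsupp.lsum ℂ fun ab => LinearMap.toSpanSingleton ℂ P2
    (((dco q ab.1 : ℝ) : ℂ) • mono (ab.1 - 1) ab.2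
      + (((q ^ (lam + 2 * (ab.1 : ℝ)) * dco q ab.2 : ℝ) : ℂ)) • mono ab.1 (ab.2 - 1))

lemma Tad_single (a b : ℕ) (d : ℂ) :
    Tad q lam (Finsupp.single (a, b) d)
      = Finsupp.single (a - 1, b) ((dco q a : ℝ) * d)
        + Finsupp.single (a, b - 1) (((q ^ (lam + 2 * (a : ℝ)) * dco q b : ℝ) : ℂ) * d) := by
  have h : Tad q lam (Finsupp.single (a, b) d) = (Finsupp.single (a, b) d : P2).sum fun ab x =>
      x • (((dco q ab.1 : ℝ) : ℂ) • mono (ab.1 - 1) ab.2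
        + (((q ^ (lam + 2 * (ab.1 : ℝ)) * dco q ab.2 : ℝ) : ℂ)) • mono ab.1 (ab.2 - 1)) := rfl
  rw [h, Finsupp.sum_single_index (by simp), smul_add, smul_smul, smul_smul]
  simp [mono, Finsupp.smul_single, mul_comm]

lemma fg_single_single (a b : ℕ) (ca cb : ℂ) :
    fg (AddMonoidAlgebra.single a ca) (AddMonoidAlgebra.single b cb) = Finsupp.single (a, b) (ca * cb) := by
  rw [fg, AddMonoidAlgebra.coeff_single, AddMonoidAlgebra.coeff_single, Finsupp.sum_single_index, Finsupp.sum_single_index]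
  · simp
  · simp [Finsupp.sum_single_index]

lemma fg_add_left (f1 f2 g : P1) : fg (f1 + f2) g = fg f1 g + fg f2 g := by
  rw [fg, fg, fg, AddMonoidAlgebra.coeff_add, Finsupp.sum_add_index']
  · intro a; simp
  · intro a b1 b2
    rw [← Finsupp.sum_add]
    exact Finsupp.sum_congr fun b _ => by rw [add_mul, Finsupp.single_add]

lemma fg_add_right (f g1 g2 : P1) : fg f (g1 + g2) = fg f g1 + fg f g2 := by
  rw [fg, fg, fg, ← Finsupp.sum_add]
  refine Finsupp.sum_congr fun a _ => ?_
  rw [AddMonoidAlgebra.coeff_add, Finsupp.sum_add_index']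
  · intro b; simp
  · intro b b1 b2; rw [mul_add, Finsupp.single_add]

lemma fg_zero_left (g : P1) : fg 0 g = 0 := by simp [fg]

lemma fg_zero_right (f : P1) : fg f 0 = 0 := by simp [fg]

end QRC
namespace QRC
open Finset Finsupp ComplexConjugate

variable {q lam lam' : ℝ}

def w1 (q : ℝ) (m : ℕ) : ℂ := (q : ℂ) ^ (m * (m - 1) / 2) * (qfactR q m : ℂ)
def w2 (q : ℝ) (a b : ℕ) : ℂ :=
  (q : ℂ) ^ (a * (a - 1) / 2 + b * (b - 1) / 2) * (qfactR q a : ℂ) * (qfactR q b : ℂ)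

lemma ip1_def (P Q : P1) : ip1 q P Q = Finsupp.sum P.coeff fun m c => c * conj (Q.coeff m) * w1 q m := rfl

lemma ip2_def (P Q : P2) :
    ip2 q P Q = Finsupp.sum P fun ab c => c * conj (Q ab) * w2 q ab.1 ab.2 := by
  rw [ip2]
  exact Finsupp.sum_congr fun ab _ => by rw [w2, mul_assoc]

lemma ip1_single_left (m : ℕ) (c : ℂ) (h : P1) :
    ip1 q (AddMonoidAlgebra.single m c) h = c * conj (h.coeff m) * w1 q m := by
  rw [ip1_def, AddMonoidAlgebra.coeff_single, Finsupp.sum_single_index (by simp)]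

lemma ip2_single_left (ab : ℕ × ℕ) (c : ℂ) (v : P2) :
    ip2 q (Finsupp.single ab c) v = c * conj (v ab) * w2 q ab.1 ab.2 := by
  rw [ip2_def, Finsupp.sum_single_index (by simp)]

lemma ip1_add_left (P1' P2' h : P1) : ip1 q (P1' + P2') h = ip1 q P1' h + ip1 q P2' h := by
  simp only [ip1_def, AddMonoidAlgebra.coeff_add]
  exact Finsupp.sum_add_index' (by simp) (by intros; ring)

lemma ip2_add_left (u v w : P2) : ip2 q (u + v) w = ip2 q u w + ip2 q v w := by
  simp only [ip2_def]
  exact Finsupp.sum_add_index' (by simp) (by intros; ring)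

lemma ip1_add_right (P h1 h2 : P1) : ip1 q P (h1 + h2) = ip1 q P h1 + ip1 q P h2 := by
  simp only [ip1_def]
  rw [← Finsupp.sum_add]
  exact Finsupp.sum_congr fun m _ => by
    rw [AddMonoidAlgebra.coeff_add, Finsupp.add_apply, map_add]; ring

lemma ip2_add_right (u v w : P2) : ip2 q u (v + w) = ip2 q u v + ip2 q u w := by
  simp only [ip2_def]
  rw [← Finsupp.sum_add]
  exact Finsupp.sum_congr fun m _ => by
    rw [Finsupp.add_apply, map_add]; ring

lemma ip1_smul_right (P h : P1) (c : ℂ) : ip1 q P (c • h) = conj c * ip1 q P h := by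
  simp only [ip1_def]
  rw [Finsupp.mul_sum]
  exact Finsupp.sum_congr fun m _ => by
    rw [AddMonoidAlgebra.coeff_smul, Finsupp.smul_apply, smul_eq_mul, map_mul]; ring

lemma ip2_smul_right (u v : P2) (c : ℂ) : ip2 q u (c • v) = conj c * ip2 q u v := by
  simp only [ip2_def]
  rw [Finsupp.mul_sum]
  exact Finsupp.sum_congr fun m _ => by
    rw [Finsupp.smul_apply, smul_eq_mul, map_mul]; ring

lemma ip1_zero_left (h : P1) : ip1 q 0 h = 0 := by simp [ip1_def]
lemma ip2_zero_left (v : P2) : ip2 q 0 v = 0 := by simp [ip2_def]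
lemma ip1_zero_right (P : P1) : ip1 q P 0 = 0 := by
  simp only [ip1_def, AddMonoidAlgebra.coeff_zero, Finsupp.coe_zero, Pi.zero_apply, map_zero,
    mul_zero, zero_mul, Finsupp.sum_fun_zero]
lemma ip2_zero_right (u : P2) : ip2 q u 0 = 0 := by
  simp only [ip2_def, Finsupp.coe_zero, Pi.zero_apply, map_zero, mul_zero, zero_mul,
    Finsupp.sum_fun_zero]

lemma ip1_smul_left (P h : P1) (c : ℂ) : ip1 q (c • P) h = c * ip1 q P h := by
  simp only [ip1_def]
  rw [AddMonoidAlgebra.coeff_smul, Finsupp.sum_smul_index (by intros; simp), Finsupp.mul_sum]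
  exact Finsupp.sum_congr fun m _ => by ring

lemma ip2_smul_left (u v : P2) (c : ℂ) : ip2 q (c • u) v = c * ip2 q u v := by
  simp only [ip2_def]
  rw [Finsupp.sum_smul_index (by intros; simp), Finsupp.mul_sum]
  exact Finsupp.sum_congr fun m _ => by ring

/-- iterated q-derivative coefficient -/
def DpowR (q : ℝ) (k a : ℕ) : ℝ := ∏ i ∈ Finset.range k, dco q (a - i)

lemma Dq_pow_single (k a : ℕ) (c : ℂ) :
    ((Dq q) ^ k) (AddMonoidAlgebra.single a c) = AddMonoidAlgebra.single (a - k) ((DpowR q k a : ℝ) * c) := by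
  induction k with
  | zero => simp [DpowR]
  | succ k ih =>
    rw [pow_succ', Module.End.mul_apply, ih, Dq_single, Nat.sub_sub]
    congr 1
    simp only [DpowR, Finset.prod_range_succ]
    push_cast
    ring

lemma DpowR_eq_zero {k a : ℕ} (h : a < k) : DpowR q k a = 0 := by
  refine Finset.prod_eq_zero (Finset.mem_range.mpr h) ?_
  rw [Nat.sub_self]
  exact dco_zero

lemma DpowR_diag (a : ℕ) : DpowR q a a = q ^ (a * (a - 1) / 2) * qfactR q a := by
  induction a with
  | zero => simp [DpowR, qfactR]
  | succ a ih =>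
    rw [DpowR, Finset.prod_range_succ']
    have h1 : ∀ i : ℕ, a + 1 - (i + 1) = a - i := fun i => by omega
    simp only [h1, Nat.sub_zero]
    rw [show (∏ i ∈ Finset.range a, dco q (a - i)) = DpowR q a a from rfl, ih,
      qfact_succ, dco, Nat.add_sub_cancel, ← tri a, pow_add]
    push_cast
    ring

lemma w1_succ (m : ℕ) : w1 q (m + 1) = ((dco q (m + 1) : ℝ) : ℂ) * w1 q m := by
  rw [w1, w1, qfact_succ, dco, show (m + 1) * (m + 1 - 1) / 2 = m * (m - 1) / 2 + m by
    rw [Nat.add_sub_cancel, tri m], pow_add, Nat.add_sub_cancel]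
  push_cast
  ring

lemma w2_succ_left (k l : ℕ) : w2 q (k + 1) l = ((dco q (k + 1) : ℝ) : ℂ) * w2 q k l := by
  rw [w2, w2, qfact_succ, dco, show (k + 1) * (k + 1 - 1) / 2 = k * (k - 1) / 2 + k by
    rw [Nat.add_sub_cancel, tri k], Nat.add_sub_cancel]
  rw [show k * (k - 1) / 2 + k + l * (l - 1) / 2 = (k * (k - 1) / 2 + l * (l - 1) / 2) + k by ring,
    pow_add]
  push_cast
  ring

lemma w2_succ_right (k l : ℕ) : w2 q k (l + 1) = ((dco q (l + 1) : ℝ) : ℂ) * w2 q k l := by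
  rw [w2, w2, qfact_succ, dco, show (l + 1) * (l + 1 - 1) / 2 = l * (l - 1) / 2 + l by
    rw [Nat.add_sub_cancel, tri l], Nat.add_sub_cancel]
  rw [show k * (k - 1) / 2 + (l * (l - 1) / 2 + l) = (k * (k - 1) / 2 + l * (l - 1) / 2) + l by ring,
    pow_add]
  push_cast
  ring

end QRC
namespace QRC
open Finset Finsupp ComplexConjugate

variable {q lam lam' : ℝ}

/-- real-exponent dco -/
def dcoR (q : ℝ) (x : ℝ) : ℝ := q ^ (x - 1) * qnumR q x

lemma dco_nat (hq : 0 < q) (m : ℕ) (hm : 1 ≤ m) : dco q m = dcoR q m := by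
  rw [dco, dcoR]
  congr 1
  rw [← Real.rpow_natCast q (m - 1)]
  congr 1
  push_cast [hm]
  ring

lemma dcoR_split (hq : 0 < q) (hq1 : q ≠ 1) (x y : ℝ) :
    dcoR q (x + y) = dcoR q x + q ^ (2 * x) * dcoR q y := by
  have h := qnum_split hq hq1 x y
  rw [Real.rpow_add hq (2 * x) y] at h
  unfold dcoR
  rw [Real.rpow_sub hq, Real.rpow_sub hq, Real.rpow_sub hq, Real.rpow_one]
  have hq0 : q ≠ 0 := ne_of_gt hq
  field_simp
  rw [mul_comm (2:ℝ) x] at h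
  linear_combination h

lemma dco_split (hq : 0 < q) (hq1 : q ≠ 1) (a b : ℕ) :
    dco q (a + 1 + (b + 1)) = dco q (a + 1) + (q ^ (2 : ℝ)) ^ (a + 1) * dco q (b + 1) := by
  have e : (q ^ (2 : ℝ)) ^ (a + 1) = q ^ (2 * ((a : ℝ) + 1)) := by
    rw [← Real.rpow_natCast (q ^ (2 : ℝ)) (a + 1), ← Real.rpow_mul hq.le]
    congr 1
    push_cast
    ring
  rw [e, dco_nat hq _ (by omega), dco_nat hq _ (by omega), dco_nat hq _ (by omega)]
  have e2 : ((a + 1 + (b + 1) : ℕ) : ℝ) = ((a : ℝ) + 1) + ((b : ℝ) + 1) := by push_cast; ring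
  have e3 : ((a + 1 : ℕ) : ℝ) = (a : ℝ) + 1 := by push_cast; ring
  have e4 : ((b + 1 : ℕ) : ℝ) = (b : ℝ) + 1 := by push_cast; ring
  rw [e2, e3, e4, dcoR_split hq hq1]

/-- the scaling constant q² -/
def rq2 (q : ℝ) : ℂ := ((q ^ (2 : ℝ) : ℝ) : ℂ)

/-- multiplication on P1 with the convolution instance pinned down -/
def pmul (u v : P1) : P1 := u * v

lemma pmul_def (u v : P1) : pmul u v = u * v := rfl

lemma pmul_add (u v w : P1) : pmul u (v + w) = pmul u v + pmul u w := mul_add u v w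
lemma add_pmul (u v w : P1) : pmul (u + v) w = pmul u w + pmul v w := add_mul u v w
lemma pmul_zero (u : P1) : pmul u 0 = 0 := mul_zero u
lemma zero_pmul (u : P1) : pmul 0 u = 0 := zero_mul u
lemma pmul_smul (c : ℂ) (u v : P1) : pmul u (c • v) = c • pmul u v := mul_smul_comm c u v
lemma smul_pmul (c : ℂ) (u v : P1) : pmul (c • u) v = c • pmul u v := smul_mul_assoc c u v

lemma sms (a b : ℕ) (x y : ℂ) :
    pmul (AddMonoidAlgebra.single a x) (AddMonoidAlgebra.single b y) = AddMonoidAlgebra.single (a + b) (x * y) :=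
  AddMonoidAlgebra.single_mul_single ..

lemma Dq_mul_ss (hq : 0 < q) (hq1 : q ≠ 1) (a b : ℕ) (x y : ℂ) :
    Dq q (pmul (AddMonoidAlgebra.single a x) (AddMonoidAlgebra.single b y))
      = pmul (Dq q (AddMonoidAlgebra.single a x)) (AddMonoidAlgebra.single b y)
        + pmul (scP (rq2 q) (AddMonoidAlgebra.single a x)) (Dq q (AddMonoidAlgebra.single b y)) := by
  rw [sms, Dq_single, Dq_single, Dq_single, scP_single, sms, sms]
  rcases a with _ | a
  · rcases b with _ | b
    · simp [dco_zero]
    · simp only [Nat.zero_add, Nat.add_zero, dco_zero, Complex.ofReal_zero, zero_mul, mul_zero,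
        AddMonoidAlgebra.single_zero, zero_add, add_zero, pow_zero, one_mul, Nat.add_sub_cancel]
      congr 1
      ring
  · rcases b with _ | b
    · simp only [Nat.zero_add, Nat.add_zero, dco_zero, Complex.ofReal_zero, zero_mul, mul_zero,
        AddMonoidAlgebra.single_zero, zero_add, add_zero, pow_zero, one_mul, Nat.add_sub_cancel]
      congr 1
      ring
    · rw [show (a + 1 - 1) + (b + 1) = a + 1 + (b + 1) - 1 by omega,
        show (a + 1) + (b + 1 - 1) = a + 1 + (b + 1) - 1 by omega]
      rw [← AddMonoidAlgebra.single_add]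
      congr 1
      rw [dco_split hq hq1 a b, rq2]
      push_cast
      ring

lemma Dq_mul (hq : 0 < q) (hq1 : q ≠ 1) (u v : P1) :
    Dq q (pmul u v) = pmul (Dq q u) v + pmul (scP (rq2 q) u) (Dq q v) := by
  revert v
  refine ext_single1 (F := fun v => Dq q (pmul u v))
    (G := fun v => pmul (Dq q u) v + pmul (scP (rq2 q) u) (Dq q v)) ?_ ?_ ?_ ?_
  · intro v w; rw [pmul_add, map_add]
  · intro v w; rw [map_add, pmul_add, pmul_add]; abel
  · simp [pmul_zero]
  · intro b y
    revert u
    refine ext_single1 (F := fun u => Dq q (pmul u (AddMonoidAlgebra.single b y)))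
      (G := fun u => pmul (Dq q u) (AddMonoidAlgebra.single b y)
        + pmul (scP (rq2 q) u) (Dq q (AddMonoidAlgebra.single b y))) ?_ ?_ ?_ ?_
    · intro v w; rw [add_pmul, map_add]
    · intro v w; rw [map_add, map_add, add_pmul, add_pmul]; abel
    · simp [zero_pmul]
    · intro a x; exact Dq_mul_ss hq hq1 a b x y

lemma scP_mul (c : ℂ) (u v : P1) : scP c (pmul u v) = pmul (scP c u) (scP c v) := by
  revert v
  refine ext_single1 (F := fun v => scP c (pmul u v)) (G := fun v => pmul (scP c u) (scP c v))
    ?_ ?_ ?_ ?_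
  · intro v w; rw [pmul_add, map_add]
  · intro v w; rw [map_add, pmul_add]
  · simp [pmul_zero]
  · intro b y
    revert u
    refine ext_single1 (F := fun u => scP c (pmul u (AddMonoidAlgebra.single b y)))
      (G := fun u => pmul (scP c u) (scP c (AddMonoidAlgebra.single b y))) ?_ ?_ ?_ ?_
    · intro v w; rw [add_pmul, map_add]
    · intro v w; rw [map_add, add_pmul]
    · simp [zero_pmul]
    · intro a x
      rw [sms, scP_single, scP_single, scP_single, sms, pow_add]
      congr 1
      ring

lemma Dq_scP (c : ℂ) (u : P1) : Dq q (scP c u) = c • scP c (Dq q u) := by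
  revert u
  refine ext_single1 (F := fun u => Dq q (scP c u)) (G := fun u => c • scP c (Dq q u)) ?_ ?_ ?_ ?_
  · intro v w; rw [map_add, map_add]
  · intro v w; rw [map_add, map_add, smul_add]
  · simp
  · intro a x
    rw [scP_single, Dq_single, Dq_single, scP_single, AddMonoidAlgebra.smul_single]
    rcases a with _ | a
    · simp [dco_zero]
    · congr 1
      rw [Nat.add_sub_cancel, pow_succ]
      simp only [smul_eq_mul]
      ring

lemma Dq_pow_scP (c : ℂ) (k : ℕ) (u : P1) :
    ((Dq q) ^ k) (scP c u) = c ^ k • scP c (((Dq q) ^ k) u) := by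
  induction k with
  | zero => simp
  | succ k ih =>
    have h1 : ((Dq q) ^ (k + 1)) (scP c u) = Dq q (((Dq q) ^ k) (scP c u)) := by
      rw [pow_succ', Module.End.mul_apply]
    have h2 : ((Dq q) ^ (k + 1)) u = Dq q (((Dq q) ^ k) u) := by
      rw [pow_succ', Module.End.mul_apply]
    rw [h1, ih, map_smul, Dq_scP, h2, ← mul_smul, ← pow_succ]

end QRC
namespace QRC
open Finset Finsupp ComplexConjugate

variable {q lam lam' : ℝ}

lemma adj_ss (k l a b : ℕ) (c d : ℂ) :
    ip2 q (ΔE q lam (Finsupp.single (k, l) c)) (Finsupp.single (a, b) d)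
      = ip2 q (Finsupp.single (k, l) c) (Tad q lam (Finsupp.single (a, b) d)) := by
  rw [ΔE_single, Tad_single, ip2_add_left, ip2_single_left, ip2_single_left, ip2_single_left]
  simp only [Finsupp.add_apply, Finsupp.single_apply, Prod.mk.injEq]
  by_cases h1 : a = k + 1 ∧ b = l
  · obtain ⟨rfl, rfl⟩ := h1
    rw [if_pos ⟨rfl, rfl⟩, if_neg (by omega), if_pos (by omega), if_neg (by omega)]
    simp only [map_zero, mul_zero, zero_mul, add_zero, zero_add, map_mul, Complex.conj_ofReal]
    rw [w2_succ_left]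
    ring
  · by_cases h2 : a = k ∧ b = l + 1
    · obtain ⟨rfl, rfl⟩ := h2
      rw [if_neg (by omega), if_pos ⟨rfl, rfl⟩, if_neg (by omega), if_pos (by omega)]
      simp only [map_zero, mul_zero, zero_mul, add_zero, zero_add, map_mul, Complex.conj_ofReal]
      rw [w2_succ_right]
      push_cast
      ring
    · rw [if_neg (by omega), if_neg (by omega)]
      have e3z : (if a - 1 = k ∧ b = l then ((dco q a : ℝ) : ℂ) * d else 0) = 0 := by
        split_ifs with h3
        · have ha0 : a = 0 := by omega
          subst ha0
          simp [dco_zero]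
        · rfl
      have e4z : (if a = k ∧ b - 1 = l
          then ((q ^ (lam + 2 * (a : ℝ)) * dco q b : ℝ) : ℂ) * d else 0) = 0 := by
        split_ifs with h4
        · have hb0 : b = 0 := by omega
          subst hb0
          simp [dco_zero]
        · rfl
      rw [e3z, e4z]
      simp

lemma adj_s (k l : ℕ) (c : ℂ) (v : P2) :
    ip2 q (ΔE q lam (Finsupp.single (k, l) c)) v
      = ip2 q (Finsupp.single (k, l) c) (Tad q lam v) := by
  revert v
  refine ext_single (F := fun v => ip2 q (ΔE q lam (Finsupp.single (k, l) c)) v)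
    (G := fun v => ip2 q (Finsupp.single (k, l) c) (Tad q lam v)) ?_ ?_ ?_ ?_
  · intro v w; rw [ip2_add_right]
  · intro v w; rw [map_add, ip2_add_right]
  · rw [ip2_zero_right, map_zero, ip2_zero_right]
  · rintro ⟨a, b⟩ d
    exact adj_ss k l a b c d

lemma adj (u v : P2) : ip2 q (ΔE q lam u) v = ip2 q u (Tad q lam v) := by
  revert u
  refine ext_single (F := fun u => ip2 q (ΔE q lam u) v)
    (G := fun u => ip2 q u (Tad q lam v)) ?_ ?_ ?_ ?_
  · intro u w; rw [map_add, ip2_add_left]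
  · intro u w; rw [ip2_add_left]
  · rw [map_zero, ip2_zero_left, ip2_zero_left]
  · rintro ⟨k, l⟩ c
    exact adj_s k l c v

lemma hsc (hq : 0 < q) (a : ℕ) :
    ((q ^ (lam + 2 * (a : ℝ)) : ℝ) : ℂ) = ((q ^ lam : ℝ) : ℂ) * (rq2 q) ^ a := by
  rw [rq2, ← Complex.ofReal_pow, ← Complex.ofReal_mul]
  congr 1
  rw [← Real.rpow_natCast (q ^ (2 : ℝ)) a, ← Real.rpow_mul hq.le, ← Real.rpow_add hq]

lemma Tad_fg (hq : 0 < q) (f g : P1) :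
    Tad q lam (fg f g)
      = fg (Dq q f) g + ((q ^ lam : ℝ) : ℂ) • fg (scP (rq2 q) f) (Dq q g) := by
  revert g
  refine ext_single1 (F := fun g => Tad q lam (fg f g))
    (G := fun g => fg (Dq q f) g + ((q ^ lam : ℝ) : ℂ) • fg (scP (rq2 q) f) (Dq q g)) ?_ ?_ ?_ ?_
  · intro v w; rw [fg_add_right, map_add]
  · intro v w; rw [map_add, fg_add_right, fg_add_right, smul_add]; abel
  · simp [fg_zero_right]
  · intro b cb
    revert f
    refine ext_single1 (F := fun f => Tad q lam (fg f (AddMonoidAlgebra.single b cb)))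
      (G := fun f => fg (Dq q f) (AddMonoidAlgebra.single b cb)
        + ((q ^ lam : ℝ) : ℂ) • fg (scP (rq2 q) f) (Dq q (AddMonoidAlgebra.single b cb))) ?_ ?_ ?_ ?_
    · intro v w; rw [fg_add_left, map_add]
    · intro v w; rw [map_add, map_add, fg_add_left, fg_add_left, smul_add]; abel
    · simp [fg_zero_left]
    · intro a ca
      rw [fg_single_single, Tad_single, Dq_single, Dq_single, scP_single,
        fg_single_single, fg_single_single, Finsupp.smul_single]
      congr 1
      · congr 1
        ring
      · congr 1
        rw [Complex.ofReal_mul, hsc hq a, smul_eq_mul]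
        ring

lemma w1_zero : w1 q 0 = 1 := by simp [w1, qfactR]

lemma ip1_shift (m : ℕ) (h : P1) :
    ip1 q (AddMonoidAlgebra.single (m + 1) 1) h = ip1 q (AddMonoidAlgebra.single m 1) (Dq q h) := by
  revert h
  refine ext_single1 (F := fun h => ip1 q (AddMonoidAlgebra.single (m + 1) 1) h)
    (G := fun h => ip1 q (AddMonoidAlgebra.single m 1) (Dq q h)) ?_ ?_ ?_ ?_
  · intro v w; rw [ip1_add_right]
  · intro v w; rw [map_add, ip1_add_right]
  · rw [ip1_zero_right, map_zero, ip1_zero_right]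
  · intro j c
    rw [Dq_single, ip1_single_left, ip1_single_left]
    simp only [AddMonoidAlgebra.coeff_single, Finsupp.single_apply]
    by_cases hj : j = m + 1
    · subst hj
      rw [if_pos rfl, if_pos (by omega), w1_succ]
      simp only [map_mul, Complex.conj_ofReal]
      ring
    · rw [if_neg hj]
      have ez : (if j - 1 = m then ((dco q j : ℝ) : ℂ) * c else 0) = 0 := by
        split_ifs with h3
        · have hj0 : j = 0 := by omega
          subst hj0
          simp [dco_zero]
        · rfl
      rw [ez]
      simp

lemma comm_pow (j : ℕ) (w : P1) :
    Dq q (((Dq q) ^ j) w) = ((Dq q) ^ j) (Dq q w) := by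
  rw [← Module.End.mul_apply, ← pow_succ', pow_succ, Module.End.mul_apply]

lemma qRC_leibniz (hq : 0 < q) (hq1 : q ≠ 1) (n : ℕ) (f g : P1) :
    Dq q (qRC q lam lam' n f g) = qRC q lam lam' n (Dq q f) g
      + ((q ^ lam : ℝ) : ℂ) • qRC q lam lam' n (scP (rq2 q) f) (Dq q g) := by
  unfold qRC
  rw [map_sum, Finset.smul_sum, ← Finset.sum_add_distrib]
  refine Finset.sum_congr rfl fun k hk => ?_
  rw [← pmul_def, ← pmul_def, ← pmul_def, map_smul, Dq_mul hq hq1, smul_add]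
  congr 1
  · rw [comm_pow]
  · rw [Dq_scP, comm_pow, Dq_pow_scP, smul_pmul, pmul_smul, smul_smul, smul_smul, smul_smul]
    congr 1
    rw [hsc hq k]
    ring

lemma ip2_sum_left {ι : Type*} (s : Finset ι) (F : ι → P2) (v : P2) :
    ip2 q (∑ i ∈ s, F i) v = ∑ i ∈ s, ip2 q (F i) v := by
  induction s using Finset.cons_induction with
  | empty => simp [ip2_zero_left]
  | cons i s hi ih => rw [Finset.sum_cons, Finset.sum_cons, ip2_add_left, ih]

lemma ip1_sum_right {ι : Type*} (s : Finset ι) (F : ι → P1) (v : P1) :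
    ip1 q v (∑ i ∈ s, F i) = ∑ i ∈ s, ip1 q v (F i) := by
  induction s using Finset.cons_induction with
  | empty => simp [ip1_zero_right]
  | cons i s hi ih => rw [Finset.sum_cons, Finset.sum_cons, ip1_add_right, ih]

lemma base_ss (hq : 0 < q) (C : ℕ → ℝ) (n : ℕ) (cQ : ℕ → ℂ) (a b : ℕ) (ca cb : ℂ) :
    ip2 q (∑ k ∈ Finset.range (n + 1), ((C k : ℝ) : ℂ) • mono k (n - k))
        (fg (AddMonoidAlgebra.single a ca) (AddMonoidAlgebra.single b cb))
      = ip1 q (AddMonoidAlgebra.single 0 1)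
          (∑ k ∈ Finset.range (n + 1), ((C k : ℝ) : ℂ) •
            pmul (((Dq q) ^ k) (AddMonoidAlgebra.single a ca))
              (scP (cQ k) (((Dq q) ^ (n - k)) (AddMonoidAlgebra.single b cb)))) := by
  rw [fg_single_single, ip2_sum_left, ip1_sum_right]
  refine Finset.sum_congr rfl fun k hk => ?_
  have hkn : k ≤ n := by
    have := Finset.mem_range.mp hk
    omega
  rw [mono, ip2_smul_left, ip2_single_left, one_mul]
  rw [Dq_pow_single, Dq_pow_single, scP_single, sms, AddMonoidAlgebra.smul_single,
    ip1_single_left, one_mul, w1_zero, mul_one]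
  simp only [AddMonoidAlgebra.coeff_single, Finsupp.single_apply, Prod.mk.injEq, smul_eq_mul]
  by_cases hc : a = k ∧ b = n - k
  · obtain ⟨rfl, rfl⟩ := hc
    rw [if_pos ⟨rfl, rfl⟩, if_pos (by omega)]
    simp only [Nat.sub_self, pow_zero, one_mul, map_mul, Complex.conj_ofReal]
    rw [DpowR_diag, DpowR_diag, w2, pow_add]
    push_cast
    ring
  · rw [if_neg hc]
    simp only [map_zero, mul_zero, zero_mul]
    rcases Nat.lt_or_ge a k with h | h
    · rw [DpowR_eq_zero h]
      simp
    · by_cases hz : a - k + (b - (n - k)) = 0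
      · have hbnk : b < n - k := by
          rcases Nat.lt_or_ge b (n - k) with h2 | h2
          · exact h2
          · exfalso
            exact hc ⟨by omega, by omega⟩
        rw [if_pos hz, DpowR_eq_zero hbnk]
        simp
      · rw [if_neg hz]
        simp

lemma base_gen (hq : 0 < q) (C : ℕ → ℝ) (n : ℕ) (cQ : ℕ → ℂ) (f g : P1) :
    ip2 q (∑ k ∈ Finset.range (n + 1), ((C k : ℝ) : ℂ) • mono k (n - k)) (fg f g)
      = ip1 q (AddMonoidAlgebra.single 0 1)
          (∑ k ∈ Finset.range (n + 1), ((C k : ℝ) : ℂ) •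
            pmul (((Dq q) ^ k) f) (scP (cQ k) (((Dq q) ^ (n - k)) g))) := by
  revert g
  refine ext_single1 (F := fun g => ip2 q _ (fg f g)) (G := fun g => ip1 q _ (∑ k ∈ Finset.range (n + 1), ((C k : ℝ) : ℂ) •
            pmul (((Dq q) ^ k) f) (scP (cQ k) (((Dq q) ^ (n - k)) g)))) ?_ ?_ ?_ ?_
  · intro v w; rw [fg_add_right, ip2_add_right]
  · intro v w
    rw [← ip1_add_right, ← Finset.sum_add_distrib]
    congr 1
    refine Finset.sum_congr rfl fun k hk => ?_
    rw [map_add, map_add, pmul_add, smul_add]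
  · rw [fg_zero_right, ip2_zero_right]
    have hz : ∀ k : ℕ, ((C k : ℝ) : ℂ) • pmul (((Dq q) ^ k) f)
        (scP (cQ k) (((Dq q) ^ (n - k)) (0 : P1))) = 0 := by
      intro k
      rw [map_zero, map_zero, pmul_zero, smul_zero]
    rw [Finset.sum_congr rfl fun k _ => hz k]
    simp [ip1_zero_right]
  · intro b cb
    revert f
    refine ext_single1 (F := fun f => ip2 q _ (fg f (AddMonoidAlgebra.single b cb)))
      (G := fun f => ip1 q _ (∑ k ∈ Finset.range (n + 1), ((C k : ℝ) : ℂ) •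
        pmul (((Dq q) ^ k) f) (scP (cQ k) (((Dq q) ^ (n - k)) (AddMonoidAlgebra.single b cb))))) ?_ ?_ ?_ ?_
    · intro v w; rw [fg_add_left, ip2_add_right]
    · intro v w
      rw [← ip1_add_right, ← Finset.sum_add_distrib]
      congr 1
      refine Finset.sum_congr rfl fun k hk => ?_
      rw [map_add, add_pmul, smul_add]
    · rw [fg_zero_left, ip2_zero_right]
      have hz : ∀ k : ℕ, ((C k : ℝ) : ℂ) • pmul (((Dq q) ^ k) (0 : P1))
          (scP (cQ k) (((Dq q) ^ (n - k)) (AddMonoidAlgebra.single b cb))) = 0 := by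
        intro k
        rw [map_zero, zero_pmul, smul_zero]
      rw [Finset.sum_congr rfl fun k _ => hz k]
      simp [ip1_zero_right]
    · intro a ca
      exact base_ss hq C n cQ a b ca cb

end QRC

namespace QRC
open Finset Finsupp ComplexConjugate

variable {q lam lam' : ℝ}

lemma key (hq : 0 < q) (hq1 : q ≠ 1) (n m : ℕ) (f g : P1) :
    ip2 q (((ΔE q lam) ^ m) (Pvec q lam lam' n)) (fg f g)
      = ip1 q (AddMonoidAlgebra.single m 1) (qRC q lam lam' n f g) := by
  induction m generalizing f g with
  | zero =>
    rw [pow_zero, Module.End.one_apply]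
    exact base_gen hq
      (fun k => qbinomR q n k * (-1) ^ k * q ^ ((k : ℝ) * (lam' + 2 * (n : ℝ) - (k : ℝ) - 1))
        * qpochR q (lam + (k : ℝ)) (n - k) * qpochR q (lam' + ((n - k : ℕ) : ℝ)) k)
      n (fun k => ((q ^ (lam + 2 * (k : ℝ)) : ℝ) : ℂ)) f g
  | succ m ih =>
    rw [pow_succ', Module.End.mul_apply, adj, Tad_fg hq, ip2_add_right, ip2_smul_right,
      Complex.conj_ofReal, ih, ih, ip1_shift, qRC_leibniz hq hq1, ip1_add_right, ip1_smul_right,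
      Complex.conj_ofReal]

end QRC

/-- **The q-Rankin–Cohen bracket is the adjoint of the holographic operator**
(Theorem 5.1): for all P ∈ ℂ[z], f ∈ ℂ[x], g ∈ ℂ[y],
⟨Ψ_n(P), f(x)g(y)⟩ = ⟨P, qRC_n(f,g)⟩ for the q-Fischer inner products. -/
theorem qRC_adjoint_of_Psi (q : ℝ) (hq : 0 < q) (hq1 : q ≠ 1)
    (lam lam' : ℝ) (hll : ∀ m : ℤ, lam + lam' ≠ (m : ℝ)) (n : ℕ)
    (P f g : P1) :
    ip2 q (Psi q lam lam' n P) (fg f g) = ip1 q P (qRC q lam lam' n f g) := by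
  revert P
  refine QRC.ext_single1 (F := fun P => ip2 q (Psi q lam lam' n P) (fg f g))
    (G := fun P => ip1 q P (qRC q lam lam' n f g)) ?_ ?_ ?_ ?_
  · intro u v; rw [map_add, QRC.ip2_add_left]
  · intro u v; rw [QRC.ip1_add_left]
  · rw [map_zero, QRC.ip2_zero_left, QRC.ip1_zero_left]
  · intro m c
    have hPsi : Psi q lam lam' n (AddMonoidAlgebra.single m c)
        = c • ((ΔE q lam ^ m) (Pvec q lam lam' n)) := by
      have h : Psi q lam lam' n (AddMonoidAlgebra.single m c)
          = (Finsupp.single m c).sum fun k d =>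
              d • ((ΔE q lam ^ k) (Pvec q lam lam' n)) := rfl
      rw [h, Finsupp.sum_single_index (by simp)]
    rw [hPsi, QRC.ip2_smul_left, QRC.key hq hq1 n m f g, QRC.ip1_single_left,
      QRC.ip1_single_left, one_mul, mul_assoc]
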